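/- arXiv:2102.11167 — 2 statements merged into one kernel-verified Lean document; each statement's English description precedes it below -/
import Mathlib

section
/- For every positive integer m and every u ∈ L²(0,1), the norm ‖Iₓᵐ u‖_{L²(0,1)}² is at most (1/2)^m · ‖u‖_{L²(0,1)}², where Iₓᵐ u(x) = ∫₀ˣ ((x−ξ)^{m−1}/(m−1)!) · u(ξ) dξ. -/
open MeasureTheory intervalIntegral

/-- The `m`-fold iterated integral (Riemann–Liouville integral of integer order `m`). -/
noncomputable def iterIntegral (m : ℕ) (u : ℝ → ℝ) (x : ℝ) : ℝ :=
  ∫ ξ in (0:ℝ)..x, ((x - ξ) ^ (m - 1) / (Nat.factorial (m - 1))) * u ξ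

lemma two_pow_le_aux (n : ℕ) :
    2 ^ (n + 1) ≤ (2 * n + 2) * (2 * n + 1) * (n.factorial) ^ 2 := by
  induction n with
  | zero => norm_num
  | succ k ih =>
    have h1 : Nat.factorial (k + 1) = (k + 1) * Nat.factorial k := rfl
    have hcoef : 2 * ((2 * k + 2) * (2 * k + 1)) ≤
        (2 * (k + 1) + 2) * (2 * (k + 1) + 1) * (k + 1) ^ 2 := by nlinarith
    calc 2 ^ (k + 1 + 1) = 2 * 2 ^ (k + 1) := by ring
      _ ≤ 2 * ((2 * k + 2) * (2 * k + 1) * k.factorial ^ 2) := Nat.mul_le_mul_left 2 ih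
      _ = (2 * ((2 * k + 2) * (2 * k + 1))) * k.factorial ^ 2 := by ring
      _ ≤ ((2 * (k + 1) + 2) * (2 * (k + 1) + 1) * (k + 1) ^ 2) * k.factorial ^ 2 :=
          Nat.mul_le_mul_right _ hcoef
      _ = (2 * (k + 1) + 2) * (2 * (k + 1) + 1) * ((k + 1).factorial) ^ 2 := by
          rw [h1]; ring

theorem norm_iterIntegral_le (m : ℕ) (hm : 0 < m) (u : ℝ → ℝ)
    (hu : MemLp u 2 (volume.restrict (Set.Ioo (0:ℝ) 1))) :
    (∫ x in (0:ℝ)..1, (iterIntegral m u x) ^ 2) ≤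
      (1 / 2) ^ m * ∫ x in (0:ℝ)..1, (u x) ^ 2 := by
  obtain ⟨n, rfl⟩ : ∃ n, m = n + 1 := ⟨m - 1, (Nat.succ_pred_eq_of_pos hm).symm⟩
  set c : ℝ := (n.factorial : ℝ) with hc_def
  have hc : 0 < c := by rw [hc_def]; exact_mod_cast n.factorial_pos
  -- move from Ioo to Ioc
  have hu1 : MemLp u 2 (volume.restrict (Set.Ioc (0:ℝ) 1)) := by
    rwa [Measure.restrict_congr_set MeasureTheory.Ioo_ae_eq_Ioc] at hu
  have husq : IntegrableOn (fun x => u x ^ 2) (Set.Ioc (0:ℝ) 1) :=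
    (memLp_two_iff_integrable_sq hu1.1).mp hu1
  set C : ℝ := ∫ x in Set.Ioc (0:ℝ) 1, u x ^ 2 with hC_def
  have hC : 0 ≤ C := setIntegral_nonneg measurableSet_Ioc fun x _ => sq_nonneg _
  -- pointwise bound
  have hpt : ∀ x ∈ Set.Ioc (0:ℝ) 1,
      (iterIntegral (n + 1) u x) ^ 2 ≤
        x ^ (2 * n + 1) * (C * (((2 * n + 1 : ℝ)) * c ^ 2)⁻¹) := by
    intro x hx
    have hx0 : (0:ℝ) ≤ x := hx.1.le
    have hux : MemLp u 2 (volume.restrict (Set.Ioc (0:ℝ) x)) := by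
      have h := hu1.restrict (μ := volume.restrict (Set.Ioc (0:ℝ) 1)) (Set.Ioc (0:ℝ) x)
      rwa [Measure.restrict_restrict measurableSet_Ioc,
        Set.inter_eq_left.mpr (Set.Ioc_subset_Ioc_right hx.2)] at h
    set K : ℝ → ℝ := fun ξ => (x - ξ) ^ n / c with hK_def
    have hKcont : Continuous K := by fun_prop
    have hK : MemLp K 2 (volume.restrict (Set.Ioc (0:ℝ) x)) := by
      rw [memLp_two_iff_integrable_sq hKcont.aestronglyMeasurable]
      exact (hKcont.pow 2).integrableOn_Ioc
    set A : ℝ := ∫ ξ in Set.Ioc (0:ℝ) x, (K ξ) ^ 2 with hA_def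
    set B : ℝ := ∫ ξ in Set.Ioc (0:ℝ) x, (u ξ) ^ 2 with hB_def
    have hA0 : 0 ≤ A := setIntegral_nonneg measurableSet_Ioc fun ξ _ => sq_nonneg _
    have hB0 : 0 ≤ B := setIntegral_nonneg measurableSet_Ioc fun ξ _ => sq_nonneg _
    have h22 : (2:ℝ).HolderConjugate 2 := ⟨by norm_num, by norm_num, by norm_num⟩
    have hof : ENNReal.ofReal (2:ℝ) = 2 := by
      rw [ENNReal.ofReal_ofNat]
    have hCS0 := integral_mul_norm_le_Lp_mul_Lq (μ := volume.restrict (Set.Ioc (0:ℝ) x))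
      h22 (hof ▸ hK) (hof ▸ hux)
    have hrw1 : (∫ ξ in Set.Ioc (0:ℝ) x, ‖K ξ‖ ^ (2:ℝ)) = A := by
      rw [hA_def]
      refine setIntegral_congr_fun measurableSet_Ioc fun ξ _ => ?_
      rw [show ((2:ℝ) = ((2:ℕ) : ℝ)) by norm_num, Real.rpow_natCast, Real.norm_eq_abs, sq_abs]
    have hrw2 : (∫ ξ in Set.Ioc (0:ℝ) x, ‖u ξ‖ ^ (2:ℝ)) = B := by
      rw [hB_def]
      refine setIntegral_congr_fun measurableSet_Ioc fun ξ _ => ?_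
      rw [show ((2:ℝ) = ((2:ℕ) : ℝ)) by norm_num, Real.rpow_natCast, Real.norm_eq_abs, sq_abs]
    rw [hrw1, hrw2] at hCS0
    have habs : |iterIntegral (n + 1) u x| ≤ A ^ (1/2:ℝ) * B ^ (1/2:ℝ) := by
      rw [iterIntegral, intervalIntegral.integral_of_le hx0]
      simp only [Nat.add_sub_cancel]
      rw [← Real.norm_eq_abs]
      refine le_trans (MeasureTheory.norm_integral_le_integral_norm _) ?_
      calc (∫ ξ in Set.Ioc (0:ℝ) x, ‖(x - ξ) ^ n / (n.factorial : ℝ) * u ξ‖)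
          = ∫ ξ in Set.Ioc (0:ℝ) x, ‖K ξ‖ * ‖u ξ‖ := by
            refine setIntegral_congr_fun measurableSet_Ioc fun ξ _ => ?_
            rw [norm_mul]
        _ ≤ A ^ (1/2:ℝ) * B ^ (1/2:ℝ) := hCS0
    have hsq : (iterIntegral (n + 1) u x) ^ 2 ≤ A * B := by
      calc (iterIntegral (n + 1) u x) ^ 2 = |iterIntegral (n + 1) u x| ^ 2 := (sq_abs _).symm
        _ ≤ (A ^ (1/2:ℝ) * B ^ (1/2:ℝ)) ^ 2 := by
            exact pow_le_pow_left₀ (abs_nonneg _) habs 2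
        _ = A * B := by
            rw [mul_pow, ← Real.rpow_natCast (A ^ (1/2:ℝ)) 2,
              ← Real.rpow_natCast (B ^ (1/2:ℝ)) 2, ← Real.rpow_mul hA0, ← Real.rpow_mul hB0]
            norm_num
    have hBC : B ≤ C := by
      rw [hB_def, hC_def]
      exact setIntegral_mono_set husq (Filter.Eventually.of_forall fun ξ => sq_nonneg _)
        (HasSubset.Subset.eventuallyLE (Set.Ioc_subset_Ioc_right hx.2))
    have hAval : A = x ^ (2 * n + 1) * (((2 * n + 1 : ℝ)) * c ^ 2)⁻¹ := by
      rw [hA_def, ← intervalIntegral.integral_of_le hx0]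
      have hpt2 : ∀ ξ : ℝ, (K ξ) ^ 2 = c⁻¹ ^ 2 * (x - ξ) ^ (2 * n) := by
        intro ξ
        rw [hK_def]
        field_simp
        ring
      simp_rw [hpt2]
      rw [intervalIntegral.integral_const_mul,
        intervalIntegral.integral_comp_sub_left (fun t => t ^ (2 * n)) x, sub_self, sub_zero,
        integral_pow]
      have h1 : (0:ℝ) ^ (2 * n + 1) = 0 := zero_pow (by omega)
      rw [h1]
      have h2 : ((2 * n : ℕ) : ℝ) + 1 = (2 * n + 1 : ℝ) := by push_cast; ring
      rw [h2, sub_zero, mul_inv, ← inv_pow]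
      ring
    calc (iterIntegral (n + 1) u x) ^ 2 ≤ A * B := hsq
      _ ≤ A * C := by exact mul_le_mul_of_nonneg_left hBC hA0
      _ = x ^ (2 * n + 1) * (C * (((2 * n + 1 : ℝ)) * c ^ 2)⁻¹) := by rw [hAval]; ring
  -- integrate the pointwise bound
  rw [intervalIntegral.integral_of_le (by norm_num : (0:ℝ) ≤ 1),
    intervalIntegral.integral_of_le (by norm_num : (0:ℝ) ≤ 1)]
  have hstep : (∫ x in Set.Ioc (0:ℝ) 1, (iterIntegral (n + 1) u x) ^ 2) ≤
      ∫ x in Set.Ioc (0:ℝ) 1, x ^ (2 * n + 1) * (C * (((2 * n + 1 : ℝ)) * c ^ 2)⁻¹) := by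
    refine integral_mono_of_nonneg (Filter.Eventually.of_forall fun x => sq_nonneg _) ?_ ?_
    · exact ((continuous_pow (2 * n + 1)).mul continuous_const).integrableOn_Ioc
    · exact (ae_restrict_iff' measurableSet_Ioc).mpr (Filter.Eventually.of_forall hpt)
  refine hstep.trans ?_
  have hval : (∫ x in Set.Ioc (0:ℝ) 1, x ^ (2 * n + 1) * (C * (((2 * n + 1 : ℝ)) * c ^ 2)⁻¹)) =
      (1 / (2 * n + 2 : ℝ)) * (C * (((2 * n + 1 : ℝ)) * c ^ 2)⁻¹) := by
    rw [← intervalIntegral.integral_of_le (by norm_num : (0:ℝ) ≤ 1),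
      intervalIntegral.integral_mul_const, integral_pow]
    have h1 : (0:ℝ) ^ (2 * n + 1 + 1) = 0 := zero_pow (by omega)
    rw [h1]
    have h2 : ((2 * n + 1 : ℕ) : ℝ) + 1 = (2 * n + 2 : ℝ) := by push_cast; ring
    rw [h2]
    norm_num
  rw [hval]
  -- final numeric inequality
  have hkey : (2:ℝ) ^ (n + 1) ≤ (2 * n + 2 : ℝ) * (2 * n + 1 : ℝ) * c ^ 2 := by
    rw [hc_def]
    exact_mod_cast two_pow_le_aux n
  have hpos1 : (0:ℝ) < (2 * n + 2 : ℝ) := by positivity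
  have hpos2 : (0:ℝ) < (2 * n + 1 : ℝ) := by positivity
  have hfinal : (1 / (2 * n + 2 : ℝ)) * (((2 * n + 1 : ℝ)) * c ^ 2)⁻¹ ≤ (1 / 2 : ℝ) ^ (n + 1) := by
    rw [one_div, ← mul_inv, one_div, inv_pow]
    exact inv_anti₀ (by positivity) (by rw [← mul_assoc]; exact hkey)
  rw [← hC_def]
  calc (1 / (2 * n + 2 : ℝ)) * (C * (((2 * n + 1 : ℝ)) * c ^ 2)⁻¹)
      = ((1 / (2 * n + 2 : ℝ)) * (((2 * n + 1 : ℝ)) * c ^ 2)⁻¹) * C := by ring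
    _ ≤ (1 / 2 : ℝ) ^ (n + 1) * C := mul_le_mul_of_nonneg_right hfinal hC
end

section
/- For 1 < α < 2, d_j = (j+1)^{2−α} − j^{2−α}, and σ_m = d_{m−1} − 2d_m + d_{m+1}, one has 0 < σ_m < 1 for all m ≥ 1. -/
open Real Set

private lemma sigma_aux_hasDerivAt {p x : ℝ} (hx : 0 < x) :
    HasDerivAt (fun y : ℝ => (y + 1) ^ p) (p * (x + 1) ^ (p - 1)) x := by
  have h1 : HasDerivAt (fun y : ℝ => y + 1) 1 x := (hasDerivAt_id x).add_const 1
  have h2 := (Real.hasDerivAt_rpow_const (x := x + 1) (p := p)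
    (Or.inl (by positivity : x + 1 ≠ 0)))
  have h3 := h2.comp x h1
  rw [mul_one] at h3
  exact h3

private lemma sigma_aux_deriv {γ : ℝ} {x : ℝ} (hx : 0 < x) :
    HasDerivAt (fun y : ℝ => (y + 1) ^ γ - y ^ γ)
      (γ * (x + 1) ^ (γ - 1) - γ * x ^ (γ - 1)) x :=
  (sigma_aux_hasDerivAt hx).sub (Real.hasDerivAt_rpow_const (Or.inl hx.ne'))

private lemma sigma_aux_cont {γ : ℝ} (hγ0 : 0 < γ) :
    Continuous (fun y : ℝ => (y + 1) ^ γ - y ^ γ) :=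
  ((Real.continuous_rpow_const hγ0.le).comp (continuous_id.add continuous_const)).sub
    (Real.continuous_rpow_const hγ0.le)

private lemma sigma_aux_convex {γ : ℝ} (hγ0 : 0 < γ) (hγ1 : γ < 1) :
    StrictConvexOn ℝ (Set.Ici (0:ℝ)) (fun y : ℝ => (y + 1) ^ γ - y ^ γ) := by
  apply strictConvexOn_of_deriv2_pos (convex_Ici 0) (sigma_aux_cont hγ0).continuousOn
  intro x hx
  rw [interior_Ici] at hx
  have hx : 0 < x := hx
  set g : ℝ → ℝ := fun y => γ * (y + 1) ^ (γ - 1) - γ * y ^ (γ - 1) with hg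
  have hev : deriv (fun y : ℝ => (y + 1) ^ γ - y ^ γ) =ᶠ[nhds x] g := by
    filter_upwards [Ioi_mem_nhds hx] with y hy
    exact (sigma_aux_deriv hy).deriv
  have hg' : HasDerivAt g
      (γ * ((γ - 1) * (x + 1) ^ (γ - 1 - 1)) - γ * ((γ - 1) * x ^ (γ - 1 - 1))) x :=
    (((sigma_aux_hasDerivAt (p := γ - 1) hx).const_mul γ).sub
      ((Real.hasDerivAt_rpow_const (Or.inl hx.ne')).const_mul γ))
  have h2 : deriv^[2] (fun y : ℝ => (y + 1) ^ γ - y ^ γ) x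
      = γ * ((γ - 1) * (x + 1) ^ (γ - 1 - 1)) - γ * ((γ - 1) * x ^ (γ - 1 - 1)) := by
    have : deriv^[2] (fun y : ℝ => (y + 1) ^ γ - y ^ γ) x
        = deriv (deriv (fun y : ℝ => (y + 1) ^ γ - y ^ γ)) x := rfl
    rw [this, hev.deriv_eq, hg'.deriv]
  rw [h2]
  have hlt : (x + 1) ^ (γ - 1 - 1) < x ^ (γ - 1 - 1) :=
    Real.rpow_lt_rpow_of_neg hx (lt_add_one x) (by linarith)
  have hkey : γ * ((γ - 1) * (x + 1) ^ (γ - 1 - 1)) - γ * ((γ - 1) * x ^ (γ - 1 - 1))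
      = γ * (1 - γ) * (x ^ (γ - 1 - 1) - (x + 1) ^ (γ - 1 - 1)) := by ring
  rw [hkey]
  exact mul_pos (mul_pos hγ0 (by linarith)) (by linarith)

private lemma sigma_aux_anti {γ : ℝ} (hγ0 : 0 < γ) (hγ1 : γ < 1) :
    StrictAntiOn (fun y : ℝ => (y + 1) ^ γ - y ^ γ) (Set.Ici (0:ℝ)) := by
  apply strictAntiOn_of_deriv_neg (convex_Ici 0) (sigma_aux_cont hγ0).continuousOn
  intro x hx
  rw [interior_Ici] at hx
  have hx : 0 < x := hx
  rw [(sigma_aux_deriv hx).deriv]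
  have hlt : (x + 1) ^ (γ - 1) < x ^ (γ - 1) :=
    Real.rpow_lt_rpow_of_neg hx (lt_add_one x) (by linarith)
  nlinarith [hlt, hγ0]

theorem sigma_pos_lt_one (α : ℝ) (hα : 1 < α ∧ α < 2)
    (d : ℕ → ℝ) (hd : ∀ j : ℕ, d j = ((j : ℝ) + 1) ^ (2 - α) - (j : ℝ) ^ (2 - α))
    (σ : ℕ → ℝ) (hσ : ∀ m : ℕ, 1 ≤ m → σ m = d (m - 1) - 2 * d m + d (m + 1)) :
    ∀ m : ℕ, 1 ≤ m → 0 < σ m ∧ σ m < 1 := by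
  obtain ⟨hα1, hα2⟩ := hα
  set γ : ℝ := 2 - α with hγdef
  have hγ0 : 0 < γ := by simp [hγdef]; linarith
  have hγ1 : γ < 1 := by simp [hγdef]; linarith
  obtain ⟨f, hf⟩ : ∃ f : ℝ → ℝ, f = fun y => (y + 1) ^ γ - y ^ γ := ⟨_, rfl⟩
  intro m hm
  have hx1 : (1:ℝ) ≤ (m:ℝ) := by exact_mod_cast hm
  set x : ℝ := (m:ℝ) with hxdef
  have hcast : ((m - 1 : ℕ) : ℝ) = x - 1 := by
    rw [Nat.cast_sub hm]; simp [hxdef]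
  have hdm1 : d (m - 1) = f (x - 1) := by
    rw [hd, hf]; rw [hcast]
  have hdm : d m = f x := by rw [hd, hf]
  have hdp1 : d (m + 1) = f (x + 1) := by rw [hd, hf]; push_cast; ring_nf; rfl
  have hσm : σ m = f (x - 1) - 2 * f x + f (x + 1) := by
    rw [hσ m hm, hdm1, hdm, hdp1]
  -- convexity midpoint
  have hconv := (sigma_aux_convex hγ0 hγ1).2 (x := x - 1) (y := x + 1)
    (by simp [Set.mem_Ici]; linarith) (by simp [Set.mem_Ici]; linarith)
    (by intro h; linarith : x - 1 ≠ x + 1)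
    (by norm_num : (0:ℝ) < 1/2) (by norm_num : (0:ℝ) < 1/2) (by norm_num)
  have hmid : ((1:ℝ)/2) • (x - 1) + ((1:ℝ)/2) • (x + 1) = x := by
    simp [smul_eq_mul]; ring
  rw [hmid] at hconv
  simp only [smul_eq_mul] at hconv
  have hx11 : x - 1 + 1 = x := by ring
  have hconv' : f x < 1/2 * f (x - 1) + 1/2 * f (x + 1) := by
    simpa [hf, hx11] using hconv
  -- anti facts
  have hanti := sigma_aux_anti hγ0 hγ1
  have hfx_lt : f (x + 1) < f x := by
    rw [hf]
    exact hanti (by simp [Set.mem_Ici]; linarith) (by simp [Set.mem_Ici]; linarith) (by linarith)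
  have hfm1_le : f (x - 1) ≤ f 0 := by
    rw [hf]
    rcases eq_or_lt_of_le (by linarith : (0:ℝ) ≤ x - 1) with h | h
    · rw [← h]
    · exact le_of_lt (hanti (Set.mem_Ici.mpr (le_refl 0)) (by simp [Set.mem_Ici]; linarith) h)
  have hf0 : f 0 = 1 := by
    rw [hf]; simp [Real.zero_rpow hγ0.ne', Real.one_rpow]
  have hfx_pos : 0 < f x := by
    have hlt : x ^ γ < (x + 1) ^ γ :=
      Real.rpow_lt_rpow (by linarith) (lt_add_one x) hγ0
    rw [hf]; simp only; linarith
  constructor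
  · rw [hσm]; linarith [hconv']
  · rw [hσm]; rw [hf0] at hfm1_le; linarith
end
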